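/- For the n×n skew-symmetric matrix K with entries k_{i,j} = 1 for i < j and k_{i,j} = −1 for i > j, every principal minor of even size s ≥ 2 equals 1. -/

import Mathlib

open scoped Classical

/-- The cycle-sum `C_S(A)`: sum over all cyclic orderings of `S` of the
corresponding cyclic products of entries of `A`. -/
noncomputable def cycleSum {n : ℕ} (A : Matrix (Fin n) (Fin n) ℂ) (S : Finset (Fin n)) : ℂ :=
  ∑ σ ∈ Finset.univ.filter
      (fun σ : Equiv.Perm (Fin n) =>
        σ.IsCycleOn (S : Set (Fin n)) ∧ ∀ i ∉ S, σ i = i),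
    ∏ i ∈ S, A i (σ i)

/-- The principal minor of `A` with row and column set `S`. -/
noncomputable def pminor {n : ℕ} (A : Matrix (Fin n) (Fin n) ℂ) (S : Finset (Fin n)) : ℂ :=
  (A.submatrix (fun i : S => (i : Fin n)) (fun i : S => (i : Fin n))).det

/-- The skew-symmetric matrix with `1`'s above the diagonal and `-1`'s below. -/
noncomputable def oneWedge (n : ℕ) : Matrix (Fin n) (Fin n) ℂ :=
  Matrix.of fun i j =>
    if (i : ℕ) < (j : ℕ) then 1 else if (j : ℕ) < (i : ℕ) then -1 else 0

def K2 : Matrix (Fin 2) (Fin 2) ℂ := !![0,1;-1,0]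

noncomputable instance : Invertible K2 := by
  refine ⟨!![0,-1;1,0], ?_, ?_⟩ <;>
    · ext i j
      fin_cases i <;> fin_cases j <;>
        simp [K2, Matrix.mul_apply, Fin.sum_univ_two, Matrix.one_apply]

lemma invOf_K2 : ⅟K2 = !![0,-1;1,0] := by
  apply invOf_eq_right_inv
  ext i j
  fin_cases i <;> fin_cases j <;>
    simp [K2, Matrix.mul_apply, Fin.sum_univ_two, Matrix.one_apply]

lemma oneWedge_block (m : ℕ) :
    (oneWedge (m + 2)).submatrix finSumFinEquiv finSumFinEquiv =
      Matrix.fromBlocks (oneWedge m) (Matrix.of fun _ _ => 1) (Matrix.of fun _ _ => -1) K2 := by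
  ext i j
  cases i with
  | inl i =>
    cases j with
    | inl j =>
      simp only [oneWedge, Matrix.submatrix_apply, finSumFinEquiv_apply_left,
        Matrix.of_apply, Matrix.fromBlocks_apply₁₁, Fin.coe_castAdd]
    | inr j =>
      simp only [oneWedge, Matrix.submatrix_apply, finSumFinEquiv_apply_left,
        finSumFinEquiv_apply_right, Matrix.of_apply, Matrix.fromBlocks_apply₁₂,
        Fin.coe_castAdd, Fin.coe_natAdd]
      have hi := i.isLt
      split_ifs <;> first | rfl | omega
  | inr i =>
    cases j with
    | inl j =>
      simp only [oneWedge, Matrix.submatrix_apply, finSumFinEquiv_apply_left,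
        finSumFinEquiv_apply_right, Matrix.of_apply, Matrix.fromBlocks_apply₂₁,
        Fin.coe_castAdd, Fin.coe_natAdd]
      have hj := j.isLt
      split_ifs <;> first | rfl | omega
    | inr j =>
      simp only [oneWedge, Matrix.submatrix_apply, finSumFinEquiv_apply_right,
        Matrix.of_apply, Matrix.fromBlocks_apply₂₂, Fin.coe_natAdd]
      fin_cases i <;> fin_cases j <;>
        · simp only [K2, Fin.isValue, Matrix.cons_val', Matrix.cons_val_zero,
            Matrix.cons_val_one, Matrix.head_cons, Matrix.empty_val',
            Matrix.cons_val_fin_one, Matrix.head_fin_const, Fin.val_zero, Fin.val_one]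
          split_ifs <;> first | rfl | omega

lemma det_oneWedge_step (m : ℕ) :
    (oneWedge (m + 2)).det = (oneWedge m).det := by
  have h := Matrix.det_submatrix_equiv_self finSumFinEquiv (oneWedge (m + 2))
  rw [← h, oneWedge_block, Matrix.det_fromBlocks₂₂, invOf_K2]
  have hd : K2.det = 1 := by simp [K2, Matrix.det_fin_two]
  rw [hd, one_mul]
  congr 1
  ext i j
  simp [Matrix.mul_apply, Matrix.sub_apply, Fin.sum_univ_two]

lemma det_oneWedge_even : ∀ k : ℕ, (oneWedge (2 * k)).det = 1 := by
  intro k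
  induction k with
  | zero => simp [Matrix.det_isEmpty]
  | succ k ih =>
    have : 2 * (k + 1) = 2 * k + 2 := by ring
    rw [this, det_oneWedge_step, ih]

theorem test (m : ℕ) (he : Even m) : (oneWedge m).det = 1 := by
  obtain ⟨k, hk⟩ := he
  have : m = 2 * k := by omega
  rw [this, det_oneWedge_even]

/-- Every even-sized principal minor (of size `≥ 2`) of the skew-symmetric
all-ones matrix equals `1`. -/
theorem stmt16 (n : ℕ) (S : Finset (Fin n)) (h2 : 2 ≤ S.card) (he : Even S.card) :
    pminor (oneWedge n) S = 1 := by
  classical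
  set e : Fin S.card ≃o S := S.orderIsoOfFin rfl with he'
  have hmono : StrictMono fun k : Fin S.card => ((e k : Fin n) : ℕ) := by
    intro a b hab
    have := e.strictMono hab
    exact this
  have key : (((oneWedge n).submatrix (fun i : S => (i : Fin n))
      (fun i : S => (i : Fin n))).submatrix e e) = oneWedge S.card := by
    ext i j
    simp only [Matrix.submatrix_apply, oneWedge, Matrix.of_apply]
    rcases lt_trichotomy i j with h | h | h
    · have hij : (i : ℕ) < (j : ℕ) := h
      have hm : ((e i : Fin n) : ℕ) < ((e j : Fin n) : ℕ) := hmono h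
      rw [if_pos hm, if_pos hij]
    · subst h; simp
    · have hji : (j : ℕ) < (i : ℕ) := h
      have hm : ((e j : Fin n) : ℕ) < ((e i : Fin n) : ℕ) := hmono h
      rw [if_neg (by omega), if_pos hm, if_neg (by omega : ¬ (i:ℕ) < (j:ℕ)), if_pos hji]
  have hdet := Matrix.det_submatrix_equiv_self e.toEquiv
    ((oneWedge n).submatrix (fun i : S => (i : Fin n)) (fun i : S => (i : Fin n)))
  unfold pminor
  rw [← hdet]
  have : ((oneWedge n).submatrix (fun i : S => (i : Fin n))
      (fun i : S => (i : Fin n))).submatrix e.toEquiv e.toEquiv = oneWedge S.card := key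
  rw [this, test S.card he]
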